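/- Let H = (V, E) be a linear hypergraph with at most n edges, each with at most n vertices, and suppose every vertex has degree at least √n. Then H admits a proper n-coloring. -/

import Mathlib

open scoped Classical

/-- A finite hypergraph is given by its finite set of edges, each a finite set of vertices.
`Linear E` means any two distinct edges share at most one vertex. -/
def HG.Linear {V : Type*} (E : Finset (Finset V)) : Prop :=
  ∀ e₁ ∈ E, ∀ e₂ ∈ E, e₁ ≠ e₂ → (e₁ ∩ e₂).card ≤ 1

/-- The degree of a vertex: the number of edges containing it. -/
noncomputable def HG.deg {V : Type*} (E : Finset (Finset V)) (v : V) : ℕ :=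
  (E.filter (fun e => v ∈ e)).card

/-- The vertex set of the hypergraph: the union of its edges. -/
noncomputable def HG.verts {V : Type*} (E : Finset (Finset V)) : Finset V := E.sup id

/-- The adjacency of a vertex `v`: vertices distinct from `v` sharing an edge with `v`. -/
noncomputable def HG.adj {V : Type*} (E : Finset (Finset V)) (v : V) : Finset V :=
  (HG.verts E).filter (fun u => u ≠ v ∧ ∃ e ∈ E, v ∈ e ∧ u ∈ e)

/-- A proper coloring: vertices lying in a common edge receive distinct colors. -/
def HG.Proper {V : Type*} {m : ℕ} (E : Finset (Finset V)) (f : V → Fin m) : Prop :=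
  ∀ e ∈ E, ∀ u ∈ e, ∀ w ∈ e, u ≠ w → f u ≠ f w

namespace EFL
variable {V : Type*}

/-- Graph adjacency induced by the hypergraph. -/
def Adj (E : Finset (Finset V)) (u w : V) : Prop :=
  u ≠ w ∧ ∃ e ∈ E, u ∈ e ∧ w ∈ e

lemma Adj.symm {E : Finset (Finset V)} {u w : V} (h : Adj E u w) : Adj E w u :=
  ⟨h.1.symm, h.2.imp fun _e ⟨he, hu, hw⟩ => ⟨he, hw, hu⟩⟩

lemma edge_subset_verts {E : Finset (Finset V)} {e : Finset V} (he : e ∈ E) :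
    e ⊆ HG.verts E :=
  Finset.le_sup (f := id) he

lemma mem_adj_iff {E : Finset (Finset V)} {v u : V} :
    u ∈ HG.adj E v ↔ u ∈ HG.verts E ∧ u ≠ v ∧ ∃ e ∈ E, v ∈ e ∧ u ∈ e := by
  simp [HG.adj]

lemma adj_eq_biUnion (E : Finset (Finset V)) (v : V) :
    HG.adj E v = (E.filter (fun e => v ∈ e)).biUnion (fun e => e.erase v) := by
  ext u
  simp only [mem_adj_iff, Finset.mem_biUnion, Finset.mem_filter, Finset.mem_erase]
  constructor
  · rintro ⟨hu, hne, e, he, hv, hue⟩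
    exact ⟨e, ⟨he, hv⟩, hne, hue⟩
  · rintro ⟨e, ⟨he, hv⟩, hne, hue⟩
    exact ⟨edge_subset_verts he hue, hne, e, he, hv, hue⟩

lemma two_le_inter_card {e f : Finset V} {a b : V}
    (ha1 : a ∈ e) (ha2 : a ∈ f) (hb1 : b ∈ e) (hb2 : b ∈ f) (hab : a ≠ b) :
    2 ≤ (e ∩ f).card := by
  have hsub : ({a, b} : Finset V) ⊆ e ∩ f := by
    intro x hx
    rcases Finset.mem_insert.mp hx with rfl | hx
    · exact Finset.mem_inter.mpr ⟨ha1, ha2⟩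
    · rw [Finset.mem_singleton.mp hx]
      exact Finset.mem_inter.mpr ⟨hb1, hb2⟩
  calc 2 = ({a, b} : Finset V).card := (Finset.card_pair hab).symm
  _ ≤ (e ∩ f).card := Finset.card_le_card hsub

/-- From linearity: two distinct edges sharing two distinct vertices are impossible. -/
lemma eq_of_two_shared {E : Finset (Finset V)} (hlin : HG.Linear E) {e f : Finset V} {a b : V}
    (he : e ∈ E) (hf : f ∈ E) (ha1 : a ∈ e) (ha2 : a ∈ f) (hb1 : b ∈ e) (hb2 : b ∈ f)
    (hab : a ≠ b) : e = f := by
  by_contra hne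
  have h2 := two_le_inter_card ha1 ha2 hb1 hb2 hab
  have h1 := hlin e he f hf hne
  omega

/-- The key counting lemma: for `v ∈ e ∈ E`, `deg v + (|e| - 1) * (T - 1) ≤ n`. -/
lemma key_count {E : Finset (Finset V)} {n T : ℕ} (hlin : HG.Linear E)
    (hE : E.card ≤ n) (hdT : ∀ v ∈ HG.verts E, T ≤ HG.deg E v)
    {e : Finset V} {v : V} (he : e ∈ E) (hv : v ∈ e) :
    HG.deg E v + (e.card - 1) * (T - 1) ≤ n := by
  set A : Finset (Finset V) := E.filter (fun f => v ∈ f) with hA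
  set F : V → Finset (Finset V) := fun u => (E.filter (fun f => u ∈ f)).erase e with hF
  have hFsub : ∀ u, F u ⊆ E := by
    intro u f hf
    exact (Finset.mem_filter.mp (Finset.mem_of_mem_erase hf)).1
  have hFdisj : ∀ u ∈ e.erase v, ∀ u' ∈ e.erase v, u ≠ u' → Disjoint (F u) (F u') := by
    intro u hu u' hu' hne
    rw [Finset.disjoint_left]
    intro f hf hf'
    have hfe : f ≠ e := Finset.ne_of_mem_erase hf
    have hfE : f ∈ E := hFsub u hf
    have hu1 : u ∈ f := (Finset.mem_filter.mp (Finset.mem_of_mem_erase hf)).2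
    have hu2 : u' ∈ f := (Finset.mem_filter.mp (Finset.mem_of_mem_erase hf')).2
    exact hfe (eq_of_two_shared hlin hfE he hu1 (Finset.mem_of_mem_erase hu)
      hu2 (Finset.mem_of_mem_erase hu') hne)
  have hAdisj : Disjoint A ((e.erase v).biUnion F) := by
    rw [Finset.disjoint_left]
    intro f hf hf'
    obtain ⟨u, hu, hfu⟩ := Finset.mem_biUnion.mp hf'
    have hfe : f ≠ e := Finset.ne_of_mem_erase hfu
    have hfE : f ∈ E := hFsub u hfu
    have hu1 : u ∈ f := (Finset.mem_filter.mp (Finset.mem_of_mem_erase hfu)).2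
    have hv1 : v ∈ f := (Finset.mem_filter.mp hf).2
    have hune : u ≠ v := Finset.ne_of_mem_erase hu
    exact hfe (eq_of_two_shared hlin hfE he hu1 (Finset.mem_of_mem_erase hu) hv1 hv hune)
  have hFcard : ∀ u ∈ e.erase v, T - 1 ≤ (F u).card := by
    intro u hu
    have hue : u ∈ e := Finset.mem_of_mem_erase hu
    have huv : u ∈ HG.verts E := edge_subset_verts he hue
    have hmem : e ∈ E.filter (fun f => u ∈ f) := Finset.mem_filter.mpr ⟨he, hue⟩
    have hcF : (F u).card = (E.filter (fun f => u ∈ f)).card - 1 :=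
      Finset.card_erase_of_mem hmem
    have hd := hdT u huv
    rw [HG.deg] at hd
    omega
  have hsum : (e.erase v).card * (T - 1) ≤ ∑ u ∈ e.erase v, (F u).card := by
    calc (e.erase v).card * (T - 1) = ∑ _u ∈ e.erase v, (T - 1) := by
          rw [Finset.sum_const, smul_eq_mul]
    _ ≤ ∑ u ∈ e.erase v, (F u).card := Finset.sum_le_sum hFcard
  have hbi : ((e.erase v).biUnion F).card = ∑ u ∈ e.erase v, (F u).card :=
    Finset.card_biUnion hFdisj
  have hunion : (A ∪ (e.erase v).biUnion F).card = A.card + ((e.erase v).biUnion F).card :=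
    Finset.card_union_of_disjoint hAdisj
  have hsubE : A ∪ (e.erase v).biUnion F ⊆ E := by
    intro f hf
    rcases Finset.mem_union.mp hf with hf | hf
    · exact (Finset.mem_filter.mp hf).1
    · obtain ⟨u, _, hfu⟩ := Finset.mem_biUnion.mp hf
      exact hFsub u hfu
  have hle : (A ∪ (e.erase v).biUnion F).card ≤ n :=
    le_trans (Finset.card_le_card hsubE) hE
  have hcarde : (e.erase v).card = e.card - 1 := Finset.card_erase_of_mem hv
  have hdegA : HG.deg E v = A.card := by rw [hA, HG.deg]
  rw [hcarde] at hsum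
  omega

/-- Every edge has at most `T + 1` vertices. -/
lemma size_le {E : Finset (Finset V)} {n T : ℕ} (hlin : HG.Linear E)
    (hE : E.card ≤ n) (hdT : ∀ v ∈ HG.verts E, T ≤ HG.deg E v)
    (hT2 : 2 ≤ T) (hnT : n ≤ T * T) {e : Finset V} (he : e ∈ E) :
    e.card ≤ T + 1 := by
  rcases Finset.eq_empty_or_nonempty e with rfl | ⟨v, hv⟩
  · simp
  have hk := key_count hlin hE hdT he hv
  have hd : T ≤ HG.deg E v := hdT v (edge_subset_verts he hv)
  -- T + (e.card - 1) * (T-1) ≤ n ≤ T*T = T + (T+1)*(T-1) - 1 < T + (T+1)*(T-1)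
  by_contra hc
  push_neg at hc
  have h1 : T + 1 ≤ e.card - 1 := by omega
  have h2 : (T + 1) * (T - 1) ≤ (e.card - 1) * (T - 1) :=
    Nat.mul_le_mul_right _ h1
  have h3 : (T + 1) * (T - 1) = T * T - 1 := by
    cases' T with T
    · omega
    · simp [Nat.succ_sub_one, Nat.mul_comm]
      ring_nf
      omega
  omega

lemma sum_deg_eq {E : Finset (Finset V)} :
    ∑ v ∈ HG.verts E, HG.deg E v = ∑ e ∈ E, e.card := by
  have h1 : ∀ v, HG.deg E v = ∑ e ∈ E, if v ∈ e then 1 else 0 := by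
    intro v
    rw [HG.deg, Finset.card_filter]
  have h2 : ∀ e ∈ E, (∑ v ∈ HG.verts E, if v ∈ e then 1 else 0) = e.card := by
    intro e he
    have hfe : (HG.verts E).filter (fun v => v ∈ e) = e := by
      ext v
      simp only [Finset.mem_filter]
      exact ⟨fun h => h.2, fun h => ⟨edge_subset_verts he h, h⟩⟩
    rw [← Finset.card_filter, hfe]
  calc ∑ v ∈ HG.verts E, HG.deg E v
      = ∑ v ∈ HG.verts E, ∑ e ∈ E, if v ∈ e then 1 else 0 := by
        exact Finset.sum_congr rfl (fun v _ => h1 v)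
    _ = ∑ e ∈ E, ∑ v ∈ HG.verts E, if v ∈ e then 1 else 0 := Finset.sum_comm
    _ = ∑ e ∈ E, e.card := Finset.sum_congr rfl h2

/-- A valid pairing: a collection of pairwise-disjoint nonadjacent pairs of vertices. -/
def ValidPairing (E : Finset (Finset V)) (P : Finset (Finset V)) : Prop :=
  (∀ p ∈ P, p.card = 2 ∧ p ⊆ HG.verts E ∧ ∀ a ∈ p, ∀ b ∈ p, a ≠ b → ¬ Adj E a b) ∧
  (∀ p ∈ P, ∀ q ∈ P, p ≠ q → Disjoint p q)

lemma exists_max_pairing (E : Finset (Finset V)) :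
    ∃ P, ValidPairing E P ∧ ∀ Q, ValidPairing E Q → Q.card ≤ P.card := by
  obtain ⟨P, hPmem, hmax⟩ := Finset.exists_max_image
    (((HG.verts E).powerset.powerset).filter (fun P => ValidPairing E P)) Finset.card
    ⟨∅, Finset.mem_filter.mpr ⟨Finset.empty_mem_powerset _, by simp [ValidPairing]⟩⟩
  refine ⟨P, (Finset.mem_filter.mp hPmem).2, fun Q hQ => hmax Q ?_⟩
  refine Finset.mem_filter.mpr ⟨Finset.mem_powerset.mpr ?_, hQ⟩
  intro p hp
  exact Finset.mem_powerset.mpr ((hQ.1 p hp).2.1)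

/-- Coloring from a large pairing. -/
lemma coloring_of_pairing {E : Finset (Finset V)} {n : ℕ} (hn : 0 < n)
    {P : Finset (Finset V)} (hP : ValidPairing E P)
    (hc : (HG.verts E).card ≤ n + P.card) : ∃ f : V → Fin n, HG.Proper E f := by
  set U : Finset V := HG.verts E \ P.biUnion (fun p => p) with hU
  set parts : Finset (Finset V) := P ∪ U.image (fun v => {v}) with hparts
  -- cardinality of parts
  have hbiU : (P.biUnion (fun p => p)).card = 2 * P.card := by
    rw [Finset.card_biUnion (fun p hp q hq hne => hP.2 p hp q hq hne)]
    rw [Finset.sum_congr rfl (fun p hp => (hP.1 p hp).1), Finset.sum_const, smul_eq_mul]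
    ring
  have hbiUsub : P.biUnion (fun p => p) ⊆ HG.verts E := by
    intro v hv
    obtain ⟨p, hp, hvp⟩ := Finset.mem_biUnion.mp hv
    exact (hP.1 p hp).2.1 hvp
  have hUcard : U.card + 2 * P.card = (HG.verts E).card := by
    rw [hU, ← hbiU]
    exact Finset.card_sdiff_add_card_eq_card hbiUsub
  have hpartscard : parts.card ≤ n := by
    have h1 : parts.card ≤ P.card + U.card :=
      le_trans (Finset.card_union_le _ _) (by
        exact Nat.add_le_add_left (Finset.card_image_le) _)
    omega
  -- cover
  have hcover : ∀ v ∈ HG.verts E, ∃ p ∈ parts, v ∈ p := by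
    intro v hv
    by_cases hvb : v ∈ P.biUnion (fun p => p)
    · obtain ⟨p, hp, hvp⟩ := Finset.mem_biUnion.mp hvb
      exact ⟨p, Finset.mem_union_left _ hp, hvp⟩
    · refine ⟨{v}, Finset.mem_union_right _ ?_, Finset.mem_singleton_self v⟩
      exact Finset.mem_image.mpr ⟨v, Finset.mem_sdiff.mpr ⟨hv, hvb⟩, rfl⟩
  -- injection into Fin n
  let g : Finset V → Fin n := fun p =>
    if hp : p ∈ parts then Fin.castLE hpartscard (parts.equivFin ⟨p, hp⟩) else ⟨0, hn⟩
  have hginj : ∀ p ∈ parts, ∀ q ∈ parts, g p = g q → p = q := by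
    intro p hp q hq h
    simp only [g, dif_pos hp, dif_pos hq] at h
    have h2 := Fin.castLE_injective hpartscard h
    have h3 := parts.equivFin.injective h2
    exact congrArg Subtype.val h3
  let pt : V → Finset V := fun v => if h : ∃ p ∈ parts, v ∈ p then h.choose else ∅
  have hpt : ∀ v ∈ HG.verts E, pt v ∈ parts ∧ v ∈ pt v := by
    intro v hv
    have h := hcover v hv
    simp only [pt, dif_pos h]
    exact ⟨h.choose_spec.1, h.choose_spec.2⟩
  refine ⟨fun v => g (pt v), ?_⟩
  intro e he u hu w hw hne hf
  have hu' := hpt u (edge_subset_verts he hu)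
  have hw' := hpt w (edge_subset_verts he hw)
  have hpq : pt u = pt w := hginj _ hu'.1 _ hw'.1 hf
  rcases Finset.mem_union.mp hu'.1 with hpP | hpI
  · exact (hP.1 _ hpP).2.2 u hu'.2 w (hpq ▸ hw'.2) hne ⟨hne, e, he, hu, hw⟩
  · obtain ⟨v₀, _, hv₀⟩ := Finset.mem_image.mp hpI
    apply hne
    have h1 : u = v₀ := Finset.mem_singleton.mp (hv₀ ▸ hu'.2)
    have h2 : w = v₀ := Finset.mem_singleton.mp (hv₀ ▸ (hpq ▸ hw'.2))
    rw [h1, h2]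

theorem main (n : ℕ) (hn : 0 < n)
    (E : Finset (Finset V)) (hlin : HG.Linear E)
    (hE : E.card ≤ n) (hsize : ∀ e ∈ E, e.card ≤ n)
    (hdeg : ∀ v ∈ HG.verts E, Real.sqrt n ≤ (HG.deg E v : ℝ)) :
    ∃ f : V → Fin n, HG.Proper E f := by
  obtain ⟨P, hP, hmax⟩ := exists_max_pairing E
  by_cases hN : (HG.verts E).card ≤ n + P.card
  · exact coloring_of_pairing hn hP hN
  exfalso
  push_neg at hN
  have hNm : n + P.card + 1 ≤ (HG.verts E).card := hN
  set N := (HG.verts E).card with hNdef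
  set m := P.card with hmdef
  -- N is at most the total size of edges
  have hsumcard : N ≤ ∑ e ∈ E, e.card := by
    have hsub : HG.verts E ⊆ E.biUnion (fun e => e) := by
      intro v hv
      obtain ⟨e, he, hve⟩ := Finset.mem_sup.mp hv
      exact Finset.mem_biUnion.mpr ⟨e, he, hve⟩
    exact le_trans (Finset.card_le_card hsub) (Finset.card_biUnion_le)
  -- n ≥ 2
  have hn2 : 2 ≤ n := by
    by_contra hc
    have hn1 : n = 1 := by omega
    have : ∑ e ∈ E, e.card ≤ 1 := by
      calc ∑ e ∈ E, e.card ≤ ∑ _e ∈ E, 1 :=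
            Finset.sum_le_sum (fun e he => hn1 ▸ hsize e he)
        _ = E.card := by simp
        _ ≤ 1 := hn1 ▸ hE
    omega
  set T : ℕ := ⌈Real.sqrt n⌉₊ with hTdef
  have hT2 : 2 ≤ T := by
    rw [hTdef]
    have h1 : (1 : ℝ) < Real.sqrt n := by
      rw [show (1:ℝ) = Real.sqrt 1 by simp]
      apply Real.sqrt_lt_sqrt (by norm_num)
      exact_mod_cast hn2
    have := Nat.lt_ceil.mpr (by exact_mod_cast h1 : ((1:ℕ) : ℝ) < Real.sqrt n)
    omega
  have hnT : n ≤ T * T := by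
    have h1 : Real.sqrt n ≤ (T : ℝ) := Nat.le_ceil _
    have h2 : (n : ℝ) ≤ (T : ℝ) * (T : ℝ) := by
      have h3 : Real.sqrt n * Real.sqrt n ≤ (T:ℝ) * (T:ℝ) :=
        mul_le_mul h1 h1 (Real.sqrt_nonneg _) (by positivity)
      rwa [Real.mul_self_sqrt (by positivity)] at h3
    exact_mod_cast h2
  have hdT : ∀ v ∈ HG.verts E, T ≤ HG.deg E v := by
    intro v hv
    rw [hTdef]
    exact Nat.ceil_le.mpr (hdeg v hv)
  have hsz : ∀ e ∈ E, e.card ≤ T + 1 := fun e he => size_le hlin hE hdT hT2 hnT he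
  -- degree sum budget
  have hbudget : ∑ v ∈ HG.verts E, HG.deg E v ≤ n * T + n := by
    calc ∑ v ∈ HG.verts E, HG.deg E v = ∑ e ∈ E, e.card := sum_deg_eq
      _ ≤ ∑ _e ∈ E, (T + 1) := Finset.sum_le_sum hsz
      _ = E.card * (T + 1) := by rw [Finset.sum_const, smul_eq_mul]
      _ ≤ n * (T + 1) := Nat.mul_le_mul_right _ hE
      _ = n * T + n := by ring
  set excess : Finset V := (HG.verts E).filter (fun v => T + 1 ≤ HG.deg E v) with hexdef
  have hex : excess.card + N * T ≤ n * T + n := by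
    have h1 : ∀ v ∈ HG.verts E, T + (if T + 1 ≤ HG.deg E v then 1 else 0) ≤ HG.deg E v := by
      intro v hv
      by_cases hc : T + 1 ≤ HG.deg E v
      · rw [if_pos hc]; omega
      · rw [if_neg hc]; simpa using hdT v hv
    have h2 : N * T + excess.card ≤ ∑ v ∈ HG.verts E, HG.deg E v := by
      calc N * T + excess.card
          = (∑ _v ∈ HG.verts E, T) + ∑ v ∈ HG.verts E, (if T + 1 ≤ HG.deg E v then 1 else 0) := by
            rw [Finset.sum_const, smul_eq_mul, ← Finset.card_filter, hexdef, hNdef, mul_comm]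
        _ = ∑ v ∈ HG.verts E, (T + if T + 1 ≤ HG.deg E v then 1 else 0) := by
            rw [← Finset.sum_add_distrib]
        _ ≤ ∑ v ∈ HG.verts E, HG.deg E v := Finset.sum_le_sum h1
    omega
  -- the unmatched vertices
  set U : Finset V := HG.verts E \ P.biUnion (fun p => p) with hUdef
  have hbiU : (P.biUnion (fun p => p)).card = 2 * m := by
    rw [Finset.card_biUnion (fun p hp q hq hne => hP.2 p hp q hq hne)]
    rw [Finset.sum_congr rfl (fun p hp => (hP.1 p hp).1), Finset.sum_const, smul_eq_mul]
    ring
  have hbiUsub : P.biUnion (fun p => p) ⊆ HG.verts E := by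
    intro v hv
    obtain ⟨p, hp, hvp⟩ := Finset.mem_biUnion.mp hv
    exact (hP.1 p hp).2.1 hvp
  have hUcard : U.card + 2 * m = N := by
    rw [hUdef, ← hbiU]
    exact Finset.card_sdiff_add_card_eq_card hbiUsub
  have hUverts : U ⊆ HG.verts E := Finset.sdiff_subset
  -- U is a clique
  have hUadj : ∀ u ∈ U, ∀ w ∈ U, u ≠ w → Adj E u w := by
    intro u hu w hw hne
    by_contra hadj
    have hunb : u ∉ P.biUnion (fun p => p) := (Finset.mem_sdiff.mp hu).2
    have hwnb : w ∉ P.biUnion (fun p => p) := (Finset.mem_sdiff.mp hw).2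
    have hupair : ({u, w} : Finset V) ∉ P := by
      intro hc
      exact hunb (Finset.mem_biUnion.mpr ⟨_, hc, Finset.mem_insert_self _ _⟩)
    have hdisjq : ∀ q ∈ P, Disjoint ({u, w} : Finset V) q := by
      intro q hq
      rw [Finset.disjoint_left]
      intro a ha haq
      have ha' : a = u ∨ a = w := by simpa using ha
      have hab : a ∈ P.biUnion (fun p => p) := Finset.mem_biUnion.mpr ⟨q, hq, haq⟩
      rcases ha' with rfl | rfl
      · exact hunb hab
      · exact hwnb hab
    have hQ : ValidPairing E (insert {u, w} P) := by
      constructor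
      · intro p hp
        rcases Finset.mem_insert.mp hp with rfl | hp'
        · refine ⟨Finset.card_pair hne, ?_, ?_⟩
          · intro a ha
            have ha' : a = u ∨ a = w := by simpa using ha
            rcases ha' with rfl | rfl
            · exact hUverts hu
            · exact hUverts hw
          · intro a ha b hb hab
            have ha' : a = u ∨ a = w := by simpa using ha
            have hb' : b = u ∨ b = w := by simpa using hb
            rcases ha' with rfl | rfl <;> rcases hb' with rfl | rfl
            · exact absurd rfl hab
            · exact hadj
            · exact fun h => hadj h.symm
            · exact absurd rfl hab
        · exact hP.1 p hp'
      · intro p hp q hq hne'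
        rcases Finset.mem_insert.mp hp with rfl | hp' <;>
          rcases Finset.mem_insert.mp hq with h2 | hq'
        · exact absurd h2.symm hne'
        · exact hdisjq q hq'
        · exact h2 ▸ (hdisjq p hp').symm
        · exact hP.2 p hp' q hq' hne'
    have hle := hmax _ hQ
    rw [Finset.card_insert_of_notMem hupair] at hle
    omega
  -- pair representatives
  have hcup : ∀ p ∈ P, ∃ cu : V × V, cu.1 ∈ p ∧ ∀ u ∈ U, u ≠ cu.2 → Adj E cu.1 u := by
    intro p hp
    obtain ⟨a, b, hab, rfl⟩ := Finset.card_eq_two.mp (hP.1 p hp).1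
    have haP : a ∈ ({a, b} : Finset V) := Finset.mem_insert_self _ _
    have hbP : b ∈ ({a, b} : Finset V) := by simp
    have hUnb : ∀ u ∈ U, u ∉ P.biUnion (fun p => p) := fun u hu => (Finset.mem_sdiff.mp hu).2
    have habU : ∀ c ∈ ({a, b} : Finset V), ∀ u ∈ U, u ≠ c := by
      intro c hc u hu h
      exact hUnb u hu (Finset.mem_biUnion.mpr ⟨_, hp, h ▸ hc⟩)
    by_cases hUb : ∀ u ∈ U, Adj E b u
    · exact ⟨(b, b), hbP, fun u hu _ => hUb u hu⟩
    push_neg at hUb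
    obtain ⟨x₂, hx₂U, hx₂⟩ := hUb
    have hkey : ∀ u₁ ∈ U, ¬ Adj E a u₁ → ∀ u₂ ∈ U, ¬ Adj E b u₂ → u₁ = u₂ := by
      intro u₁ hu₁U hu₁ u₂ hu₂U hu₂
      by_contra hne12
      have hu₁a : u₁ ≠ a := habU a haP u₁ hu₁U
      have hu₁b : u₁ ≠ b := habU b hbP u₁ hu₁U
      have hu₂a : u₂ ≠ a := habU a haP u₂ hu₂U
      have hu₂b : u₂ ≠ b := habU b hbP u₂ hu₂U
      set p₁ : Finset V := {a, u₁} with hp₁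
      set p₂ : Finset V := {b, u₂} with hp₂
      set Q : Finset (Finset V) := insert p₁ (insert p₂ (P.erase {a, b})) with hQdef
      have hd12 : Disjoint p₁ p₂ := by
        rw [Finset.disjoint_left]
        intro c hc hc2
        have hc' : c = a ∨ c = u₁ := by simpa [hp₁] using hc
        have hc2' : c = b ∨ c = u₂ := by simpa [hp₂] using hc2
        rcases hc' with rfl | rfl <;> rcases hc2' with h | h
        · exact hab h
        · exact hu₂a h.symm
        · exact hu₁b h
        · exact hne12 h
      have hd1q : ∀ q ∈ P.erase {a, b}, Disjoint p₁ q := by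
        intro q hq
        have hqP : q ∈ P := Finset.mem_of_mem_erase hq
        have hqne : q ≠ ({a, b} : Finset V) := Finset.ne_of_mem_erase hq
        rw [Finset.disjoint_left]
        intro c hc hcq
        have hc' : c = a ∨ c = u₁ := by simpa [hp₁] using hc
        rcases hc' with rfl | h
        · exact Finset.disjoint_left.mp (hP.2 q hqP _ hp hqne) hcq haP
        · exact hUnb u₁ hu₁U (Finset.mem_biUnion.mpr ⟨q, hqP, h ▸ hcq⟩)
      have hd2q : ∀ q ∈ P.erase {a, b}, Disjoint p₂ q := by
        intro q hq
        have hqP : q ∈ P := Finset.mem_of_mem_erase hq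
        have hqne : q ≠ ({a, b} : Finset V) := Finset.ne_of_mem_erase hq
        rw [Finset.disjoint_left]
        intro c hc hcq
        have hc' : c = b ∨ c = u₂ := by simpa [hp₂] using hc
        rcases hc' with rfl | h
        · exact Finset.disjoint_left.mp (hP.2 q hqP _ hp hqne) hcq hbP
        · exact hUnb u₂ hu₂U (Finset.mem_biUnion.mpr ⟨q, hqP, h ▸ hcq⟩)
      have hp₂mem : p₂ ∉ P.erase {a, b} := by
        intro hc
        exact hUnb u₂ hu₂U (Finset.mem_biUnion.mpr ⟨p₂, Finset.mem_of_mem_erase hc,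
          by simp [hp₂]⟩)
      have hp₁mem : p₁ ∉ insert p₂ (P.erase {a, b}) := by
        intro hc
        rcases Finset.mem_insert.mp hc with h | h
        · have h1 : u₁ ∈ p₂ := h ▸ (by simp [hp₁] : u₁ ∈ p₁)
          have h2 : u₁ = b ∨ u₁ = u₂ := by simpa [hp₂] using h1
          rcases h2 with h' | h'
          · exact hu₁b h'
          · exact hne12 h'
        · exact hUnb u₁ hu₁U (Finset.mem_biUnion.mpr ⟨p₁, Finset.mem_of_mem_erase h,
            by simp [hp₁]⟩)
      have hQcard : Q.card = m + 1 := by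
        rw [hQdef, Finset.card_insert_of_notMem hp₁mem, Finset.card_insert_of_notMem hp₂mem,
          Finset.card_erase_of_mem hp]
        have h1 : 1 ≤ P.card := Finset.card_pos.mpr ⟨_, hp⟩
        omega
      have hQvalid : ValidPairing E Q := by
        constructor
        · intro q hq
          rcases Finset.mem_insert.mp hq with rfl | hq'
          · refine ⟨Finset.card_pair (fun h => hu₁a h.symm), ?_, ?_⟩
            · intro c hc
              have hc' : c = a ∨ c = u₁ := by simpa [hp₁] using hc
              rcases hc' with rfl | rfl
              · exact (hP.1 _ hp).2.1 haP
              · exact hUverts hu₁U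
            · intro c hc d hd hcd
              have hc' : c = a ∨ c = u₁ := by simpa [hp₁] using hc
              have hd' : d = a ∨ d = u₁ := by simpa [hp₁] using hd
              rcases hc' with rfl | rfl <;> rcases hd' with rfl | rfl
              · exact absurd rfl hcd
              · exact hu₁
              · exact fun h => hu₁ h.symm
              · exact absurd rfl hcd
          rcases Finset.mem_insert.mp hq' with rfl | hq''
          · refine ⟨Finset.card_pair (fun h => hu₂b h.symm), ?_, ?_⟩
            · intro c hc
              have hc' : c = b ∨ c = u₂ := by simpa [hp₂] using hc
              rcases hc' with rfl | rfl
              · exact (hP.1 _ hp).2.1 hbP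
              · exact hUverts hu₂U
            · intro c hc d hd hcd
              have hc' : c = b ∨ c = u₂ := by simpa [hp₂] using hc
              have hd' : d = b ∨ d = u₂ := by simpa [hp₂] using hd
              rcases hc' with rfl | rfl <;> rcases hd' with rfl | rfl
              · exact absurd rfl hcd
              · exact hu₂
              · exact fun h => hu₂ h.symm
              · exact absurd rfl hcd
          · exact hP.1 _ (Finset.mem_of_mem_erase hq'')
        · intro q hq r hr hqr
          have hmem : ∀ s ∈ Q, s = p₁ ∨ s = p₂ ∨ s ∈ P.erase {a, b} := by
            intro s hs
            rcases Finset.mem_insert.mp hs with rfl | hs'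
            · exact Or.inl rfl
            rcases Finset.mem_insert.mp hs' with rfl | hs''
            · exact Or.inr (Or.inl rfl)
            · exact Or.inr (Or.inr hs'')
          rcases hmem q hq with rfl | rfl | hq' <;> rcases hmem r hr with rfl | rfl | hr'
          · exact absurd rfl hqr
          · exact hd12
          · exact hd1q r hr'
          · exact hd12.symm
          · exact absurd rfl hqr
          · exact hd2q r hr'
          · exact (hd1q q hq').symm
          · exact (hd2q q hq').symm
          · exact hP.2 _ (Finset.mem_of_mem_erase hq') _ (Finset.mem_of_mem_erase hr') hqr
      have hle := hmax Q hQvalid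
      omega
    refine ⟨(a, x₂), haP, ?_⟩
    intro u huU hux
    by_contra hadj'
    exact hux (hkey u huU hadj' x₂ hx₂U hx₂)
  choose cu hcu1 hcu2 using hcup
  set Cimg : Finset V := P.attach.image (fun q => (cu q.1 q.2).1) with hCdef
  set partners : Finset V := P.attach.image (fun q => (cu q.1 q.2).2) with hpartdef
  have hCcard : Cimg.card = m := by
    rw [hCdef]
    rw [Finset.card_image_of_injOn, Finset.card_attach]
    intro q1 hq1 q2 hq2 heq
    by_contra hne
    have hne' : q1.1 ≠ q2.1 := fun h => hne (Subtype.ext h)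
    have hd := hP.2 q1.1 q1.2 q2.1 q2.2 hne'
    have h2 : (cu q1.1 q1.2).1 ∈ q2.1 := by
      rw [show (cu q1.1 q1.2).1 = (cu q2.1 q2.2).1 from heq]
      exact hcu1 q2.1 q2.2
    exact (Finset.disjoint_left.mp hd (hcu1 q1.1 q1.2)) h2
  have hCU : Disjoint U Cimg := by
    rw [Finset.disjoint_right]
    intro w hw
    obtain ⟨q, _, rfl⟩ := Finset.mem_image.mp hw
    have : (cu q.1 q.2).1 ∈ P.biUnion (fun p => p) :=
      Finset.mem_biUnion.mpr ⟨q.1, q.2, hcu1 q.1 q.2⟩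
    rw [hUdef]
    simp only [Finset.mem_sdiff]
    tauto
  set Tset : Finset V := U ∪ Cimg with hTsetdef
  have hTcard : Tset.card = U.card + m := by
    rw [hTsetdef, Finset.card_union_of_disjoint hCU, hCcard]
  have hTn1 : n + 1 ≤ Tset.card := by omega
  have hTverts : Tset ⊆ HG.verts E := by
    rw [hTsetdef]
    apply Finset.union_subset hUverts
    intro w hw
    obtain ⟨q, _, rfl⟩ := Finset.mem_image.mp hw
    exact (hP.1 q.1 q.2).2.1 (hcu1 q.1 q.2)
  have hpartners : partners.card ≤ m := by
    rw [hpartdef]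
    exact le_trans Finset.card_image_le (by simp [hmdef])
  -- the good set
  set Gd : Finset V := U \ (partners ∪ excess) with hGddef
  have hGd2 : 2 ≤ Gd.card := by
    have hc1 : U ⊆ Gd ∪ (partners ∪ excess) := by
      rw [hGddef]
      intro u hu
      by_cases hc : u ∈ partners ∪ excess
      · exact Finset.mem_union_right _ hc
      · exact Finset.mem_union_left _ (Finset.mem_sdiff.mpr ⟨hu, hc⟩)
    have hc2 : U.card ≤ Gd.card + (partners.card + excess.card) :=
      le_trans (Finset.card_le_card hc1)
        (le_trans (Finset.card_union_le _ _)
          (by exact Nat.add_le_add_left (Finset.card_union_le _ _) _))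
    -- arithmetic
    have hNn : n ≤ N := by omega
    have hsplit : (N - n) * T + n * T = N * T := by
      rw [← Nat.add_mul, Nat.sub_add_cancel hNn]
    have hTge : (N - n) * 2 ≤ (N - n) * T := Nat.mul_le_mul_left _ hT2
    omega
  obtain ⟨x, hxGd, y, hyGd, hxy⟩ := Finset.one_lt_card.mp hGd2
  -- main structural analysis for good vertices
  have hforz : ∀ z ∈ Gd, HG.adj E z = Tset.erase z ∧ HG.deg E z = T ∧
      (∀ e ∈ E, z ∈ e → e.card = T + 1) := by
    intro z hzGd
    obtain ⟨hzU, hznot⟩ := Finset.mem_sdiff.mp hzGd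
    have hzverts : z ∈ HG.verts E := hUverts hzU
    have hznp : z ∉ partners := fun h => hznot (Finset.mem_union_left _ h)
    have hznx : z ∉ excess := fun h => hznot (Finset.mem_union_right _ h)
    have hzdeg : HG.deg E z = T := by
      have h1 := hdT z hzverts
      have h2 : ¬ (T + 1 ≤ HG.deg E z) := by
        intro hc
        exact hznx (Finset.mem_filter.mpr ⟨hzverts, hc⟩)
      omega
    have hzT : z ∈ Tset := Finset.mem_union_left _ hzU
    have hsub : Tset.erase z ⊆ HG.adj E z := by
      intro w hw
      obtain ⟨hwz, hwT⟩ := Finset.mem_erase.mp hw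
      rcases Finset.mem_union.mp hwT with hwU | hwC
      · obtain ⟨_, e, he, hze, hwe⟩ := hUadj z hzU w hwU (fun h => hwz h.symm)
        exact mem_adj_iff.mpr ⟨hUverts hwU, hwz, e, he, hze, hwe⟩
      · obtain ⟨q, _, rfl⟩ := Finset.mem_image.mp hwC
        have hzup : z ≠ (cu q.1 q.2).2 := by
          intro hc
          exact hznp (Finset.mem_image.mpr ⟨q, Finset.mem_attach _ _, hc.symm⟩)
        obtain ⟨hne, e, he, hce, hze⟩ := hcu2 q.1 q.2 z hzU hzup
        exact mem_adj_iff.mpr ⟨hTverts hwT, hne, e, he, hze, hce⟩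
    have hfiltercard : (E.filter (fun e => z ∈ e)).card = T := hzdeg
    have hTn : T ≤ n := by
      have : (E.filter (fun e => z ∈ e)).card ≤ E.card := Finset.card_filter_le _ _
      omega
    have hperE : ∀ e ∈ E.filter (fun e => z ∈ e), (T - 1) * (e.card - 1) + T ≤ n := by
      intro e he'
      obtain ⟨heE, hze⟩ := Finset.mem_filter.mp he'
      have h := key_count hlin hE hdT heE hze
      rw [Nat.mul_comm] at h
      omega
    have hadjle : (HG.adj E z).card ≤ ∑ e ∈ E.filter (fun e => z ∈ e), (e.card - 1) := by
      rw [adj_eq_biUnion]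
      refine le_trans Finset.card_biUnion_le (Finset.sum_le_sum ?_)
      intro e he'
      exact le_of_eq (Finset.card_erase_of_mem (Finset.mem_filter.mp he').2)
    have hsumub : (T - 1) * (∑ e ∈ E.filter (fun e => z ∈ e), (e.card - 1)) ≤ T * (n - T) := by
      rw [Finset.mul_sum]
      calc ∑ e ∈ E.filter (fun e => z ∈ e), (T - 1) * (e.card - 1)
          ≤ ∑ _e ∈ E.filter (fun e => z ∈ e), (n - T) := by
            refine Finset.sum_le_sum ?_
            intro e he'
            have := hperE e he'
            omega
        _ = T * (n - T) := by rw [Finset.sum_const, smul_eq_mul, hfiltercard]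
    have hmulfacts : T * (n - T) = T * n - T * T ∧ (T - 1) * n = T * n - n ∧
        T * T ≤ T * n ∧ n ≤ T * n := by
      refine ⟨Nat.mul_sub _ _ _, Nat.sub_one_mul _ _, Nat.mul_le_mul_left _ hTn,
        Nat.le_mul_of_pos_left _ (by omega)⟩
    have hTnT : T * (n - T) ≤ (T - 1) * n := by
      obtain ⟨e1, e2, e3, e4⟩ := hmulfacts
      omega
    have hsumn : ∑ e ∈ E.filter (fun e => z ∈ e), (e.card - 1) ≤ n :=
      Nat.le_of_mul_le_mul_left (le_trans hsumub hTnT) (by omega)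
    have herase : (Tset.erase z).card = Tset.card - 1 := Finset.card_erase_of_mem hzT
    have hcardsub : (Tset.erase z).card ≤ (HG.adj E z).card := Finset.card_le_card hsub
    have hadjn : (HG.adj E z).card = n := by
      have h1 : (HG.adj E z).card ≤ n := le_trans hadjle hsumn
      omega
    have hadjeq : HG.adj E z = Tset.erase z :=
      (Finset.eq_of_subset_of_card_le hsub (by omega)).symm
    have hsumeq : ∑ e ∈ E.filter (fun e => z ∈ e), (e.card - 1) = n := by
      have := le_trans (le_of_eq hadjn.symm) hadjle
      omega
    have hnTT : n = T * T := by
      have h1 : (T - 1) * n ≤ T * (n - T) := by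
        calc (T - 1) * n
            = (T - 1) * (∑ e ∈ E.filter (fun e => z ∈ e), (e.card - 1)) := by rw [hsumeq]
          _ ≤ T * (n - T) := hsumub
      obtain ⟨e1, e2, e3, e4⟩ := hmulfacts
      omega
    refine ⟨hadjeq, hzdeg, ?_⟩
    intro e heE hze
    have hef : e ∈ E.filter (fun e => z ∈ e) := Finset.mem_filter.mpr ⟨heE, hze⟩
    have hub : ∀ f ∈ E.filter (fun e => z ∈ e), f.card - 1 ≤ T := by
      intro f hf
      have h := hperE f hf
      have h2 : (T - 1) * (f.card - 1) ≤ (T - 1) * T := by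
        have h3 : (T - 1) * T = T * T - T := Nat.sub_one_mul _ _
        have h4 : T ≤ T * T := Nat.le_mul_of_pos_left _ (by omega)
        omega
      exact Nat.le_of_mul_le_mul_left h2 (by omega)
    by_contra hc
    have hzce : 1 ≤ e.card := Finset.card_pos.mpr ⟨z, hze⟩
    have hlt : e.card - 1 < T := by
      have := hub e hef
      omega
    have hslt : ∑ f ∈ E.filter (fun e => z ∈ e), (f.card - 1)
        < ∑ _f ∈ E.filter (fun e => z ∈ e), T :=
      Finset.sum_lt_sum hub ⟨e, hef, hlt⟩
    rw [Finset.sum_const, smul_eq_mul, hfiltercard] at hslt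
    omega
  obtain ⟨hxadj, hxdeg, _⟩ := hforz x hxGd
  obtain ⟨hyadj, hydeg, hysz⟩ := hforz y hyGd
  have hyU : y ∈ U := (Finset.mem_sdiff.mp hyGd).1
  have hxU : x ∈ U := (Finset.mem_sdiff.mp hxGd).1
  have hxT : x ∈ Tset := Finset.mem_union_left _ hxU
  have hyT : y ∈ Tset := Finset.mem_union_left _ hyU
  -- every edge through y is inside Tset
  have hyTsub : ∀ e ∈ E, y ∈ e → e ⊆ Tset := by
    intro e he hye u hu
    by_cases huy : u = y
    · exact huy ▸ hyT
    · have : u ∈ HG.adj E y := mem_adj_iff.mpr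
        ⟨edge_subset_verts he hu, huy, e, he, hye, hu⟩
      rw [hyadj] at this
      exact Finset.mem_of_mem_erase this
  -- every edge through y contains x
  have hxin : ∀ e ∈ E, y ∈ e → x ∈ e := by
    intro e he hye
    by_contra hxe
    -- e is covered by the edges through x, one vertex each
    have hcov : e ⊆ (E.filter (fun f => x ∈ f)).biUnion (fun f => e ∩ f.erase x) := by
      intro u hu
      have huT : u ∈ Tset := hyTsub e he hye hu
      have hux : u ≠ x := fun h => hxe (h ▸ hu)
      have : u ∈ HG.adj E x := by
        rw [hxadj]
        exact Finset.mem_erase.mpr ⟨hux, huT⟩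
      rw [adj_eq_biUnion] at this
      obtain ⟨f, hf, huf⟩ := Finset.mem_biUnion.mp this
      exact Finset.mem_biUnion.mpr ⟨f, hf, Finset.mem_inter.mpr ⟨hu, huf⟩⟩
    have hcard : e.card ≤ ∑ f ∈ E.filter (fun f => x ∈ f), (e ∩ f.erase x).card :=
      le_trans (Finset.card_le_card hcov) Finset.card_biUnion_le
    have hone : ∀ f ∈ E.filter (fun f => x ∈ f), (e ∩ f.erase x).card ≤ 1 := by
      intro f hf
      obtain ⟨hfE, hxf⟩ := Finset.mem_filter.mp hf
      have hef : e ≠ f := fun h => hxe (h ▸ hxf)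
      calc (e ∩ f.erase x).card ≤ (e ∩ f).card :=
            Finset.card_le_card (Finset.inter_subset_inter (Finset.Subset.refl e) (Finset.erase_subset _ _))
        _ ≤ 1 := hlin e he f hfE hef
    have hsum1 : ∑ f ∈ E.filter (fun f => x ∈ f), (e ∩ f.erase x).card ≤ HG.deg E x := by
      calc ∑ f ∈ E.filter (fun f => x ∈ f), (e ∩ f.erase x).card
          ≤ ∑ _f ∈ E.filter (fun f => x ∈ f), 1 := Finset.sum_le_sum hone
        _ = HG.deg E x := by rw [Finset.sum_const, smul_eq_mul, mul_one]; rfl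
    have hecard : e.card = T + 1 := hysz e he hye
    omega
  -- two distinct edges through y, both containing x: contradiction with linearity
  have hdy2 : 2 ≤ (E.filter (fun e => y ∈ e)).card := by
    have : HG.deg E y = T := hydeg
    rw [HG.deg] at this
    omega
  obtain ⟨e₁, he₁, e₂, he₂, he12⟩ := Finset.one_lt_card.mp hdy2
  obtain ⟨he₁E, hye₁⟩ := Finset.mem_filter.mp he₁
  obtain ⟨he₂E, hye₂⟩ := Finset.mem_filter.mp he₂
  exact he12 (eq_of_two_shared hlin he₁E he₂E (hxin e₁ he₁E hye₁) (hxin e₂ he₂E hye₂)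
    hye₁ hye₂ (fun h => hxy h))

end EFL

theorem stmt8 {V : Type*} [DecidableEq V] (n : ℕ) (hn : 0 < n)
    (E : Finset (Finset V)) (hlin : HG.Linear E)
    (hE : E.card ≤ n) (hsize : ∀ e ∈ E, e.card ≤ n)
    (hdeg : ∀ v ∈ HG.verts E, Real.sqrt n ≤ (HG.deg E v : ℝ)) :
    ∃ f : V → Fin n, HG.Proper E f := by
  exact EFL.main n hn E hlin hE hsize hdeg
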